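/- For all real numbers b, c, μ with 0 ≤ b ≤ c and 0 ≤ μ ≤ 1, one has (b + c)^μ ≤ c^μ + (2^μ − 1)·b^μ. -/

import Mathlib

theorem weighted_power_le (b c μ : ℝ) (hb : 0 ≤ b) (hbc : b ≤ c) (hμ0 : 0 ≤ μ) (hμ1 : μ ≤ 1) :
    (b + c) ^ μ ≤ c ^ μ + (2 ^ μ - 1) * b ^ μ := by
  rcases eq_or_lt_of_le hb with hb0 | hb0
  · simp [← hb0, Real.zero_rpow, Real.rpow_natCast]
    rcases eq_or_lt_of_le hμ0 with hμ | hμ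
    · simp [← hμ]
    · simp [Real.zero_rpow hμ.ne']
  · -- b > 0
    set f : ℝ → ℝ := fun x => (b + x) ^ μ - x ^ μ with hf
    have key : AntitoneOn f (Set.Ici b) := by
      have hcont : ContinuousOn f (Set.Ici b) := by
        apply ContinuousOn.sub
        · exact ((Real.continuous_rpow_const hμ0).comp (continuous_const.add continuous_id)).continuousOn
        · exact (Real.continuous_rpow_const hμ0).continuousOn
      apply antitoneOn_of_deriv_nonpos (convex_Ici b) hcont
      · intro x hx
        rw [interior_Ici] at hx
        have hx0 : 0 < x := hb0.trans hx
        have h1 : HasDerivAt (fun x : ℝ => (b + x) ^ μ) (μ * (b + x) ^ (μ - 1)) x := by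
          have := (Real.hasDerivAt_rpow_const (x := b + x) (p := μ)
            (Or.inl (by positivity))).comp x ((hasDerivAt_id x).const_add b)
          simpa [Function.comp_def] using this
        have h2 : HasDerivAt (fun x : ℝ => x ^ μ) (μ * x ^ (μ - 1)) x :=
          Real.hasDerivAt_rpow_const (Or.inl hx0.ne')
        exact (h1.sub h2).differentiableAt.differentiableWithinAt
      · intro x hx
        rw [interior_Ici] at hx
        have hx0 : 0 < x := hb0.trans hx
        have h1 : HasDerivAt (fun x : ℝ => (b + x) ^ μ) (μ * (b + x) ^ (μ - 1)) x := by
          have := (Real.hasDerivAt_rpow_const (x := b + x) (p := μ)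
            (Or.inl (by positivity))).comp x ((hasDerivAt_id x).const_add b)
          simpa [Function.comp_def] using this
        have h2 : HasDerivAt (fun x : ℝ => x ^ μ) (μ * x ^ (μ - 1)) x :=
          Real.hasDerivAt_rpow_const (Or.inl hx0.ne')
        rw [show deriv f x = μ * (b + x) ^ (μ - 1) - μ * x ^ (μ - 1) from (h1.sub h2).deriv]
        have hle : (b + x) ^ (μ - 1) ≤ x ^ (μ - 1) :=
          Real.rpow_le_rpow_of_nonpos hx0 (by linarith) (by linarith)
        nlinarith [Real.rpow_nonneg (le_of_lt hx0) (μ - 1)]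
    have hfc : f c ≤ f b := key (Set.self_mem_Ici) (Set.mem_Ici.mpr hbc) hbc
    have hbb : (b + b) ^ μ = 2 ^ μ * b ^ μ := by
      rw [show b + b = 2 * b by ring, Real.mul_rpow (by norm_num) hb]
    simp only [hf, hbb] at hfc
    linarith
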